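/- Let H be a complex Hilbert space, let T be a bounded linear operator on H with canonical polar decomposition T = U|T|, and let T^D = |T|U be its Duggal transform. Then for every complex number γ, ‖T^D - γI‖ ≤ ‖T - γI‖. In particular, ‖T^D‖ ≤ ‖T‖. -/

import Mathlib

open ContinuousLinearMap
open scoped InnerProductSpace

set_option maxHeartbeats 1000000 in
/-- For the Duggal transform `T^D = |T|U` one has `‖T^D - γI‖ ≤ ‖T - γI‖` for every `γ ∈ ℂ`;
in particular `‖T^D‖ ≤ ‖T‖`. -/
theorem stmt6 {H : Type*} [NormedAddCommGroup H] [InnerProductSpace ℂ H] [CompleteSpace H]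
    (T U R : H →L[ℂ] H)
    (hRpos : R.IsPositive) (hRsq : R * R = adjoint T * T)
    (hUpar : U * adjoint U * U = U)
    (hker : LinearMap.ker (U : H →ₗ[ℂ] H) = LinearMap.ker (T : H →ₗ[ℂ] H))
    (hTUR : T = U * R) :
    (∀ γ : ℂ, ‖R * U - γ • (1 : H →L[ℂ] H)‖ ≤ ‖T - γ • (1 : H →L[ℂ] H)‖) ∧
    ‖R * U‖ ≤ ‖T‖ := by
  have hR_sa : adjoint R = R := hRpos.isSelfAdjoint.adjoint_eq
  set P : H →L[ℂ] H := adjoint U * U with hPdef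
  -- adjoint of P
  have hP_sa : adjoint P = P := by
    rw [hPdef, ← star_eq_adjoint]
    simp [star_mul, star_eq_adjoint, adjoint_adjoint]
  have hP2 : P * P = P := by
    rw [hPdef]
    calc adjoint U * U * (adjoint U * U) = adjoint U * (U * adjoint U * U) := by noncomm_ring
    _ = adjoint U * U := by rw [hUpar]
  have hUP : U * P = U := by rw [hPdef, ← mul_assoc, hUpar]
  -- ‖R x‖ = ‖T x‖
  have hnormRT : ∀ x : H, ‖R x‖ = ‖T x‖ := by
    intro x
    have h1 : ⟪R x, R x⟫_ℂ = ⟪T x, T x⟫_ℂ := by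
      calc ⟪R x, R x⟫_ℂ = ⟪adjoint R (R x), x⟫_ℂ := by rw [adjoint_inner_left]
      _ = ⟪(R * R) x, x⟫_ℂ := by rw [hR_sa]; rfl
      _ = ⟪(adjoint T * T) x, x⟫_ℂ := by rw [hRsq]
      _ = ⟪adjoint T (T x), x⟫_ℂ := rfl
      _ = ⟪T x, T x⟫_ℂ := adjoint_inner_left T x (T x)
    rw [inner_self_eq_norm_sq_to_K, inner_self_eq_norm_sq_to_K] at h1
    have h2 : (‖R x‖ : ℝ) ^ 2 = ‖T x‖ ^ 2 := by exact_mod_cast h1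
    nlinarith [norm_nonneg (R x), norm_nonneg (T x)]
  set Q : H →L[ℂ] H := 1 - P with hQdef
  have hQ_sa : adjoint Q = Q := by
    rw [hQdef, ← star_eq_adjoint, star_sub, star_one, star_eq_adjoint, hP_sa]
  have hPQ : P * Q = 0 := by rw [hQdef, mul_sub, mul_one, hP2, sub_self]
  have hQP : Q * P = 0 := by rw [hQdef, sub_mul, one_mul, hP2, sub_self]
  -- R * Q = 0
  have hRQ : R * Q = 0 := by
    ext x
    have hPQx : P (Q x) = 0 := by rw [← ContinuousLinearMap.mul_apply, hPQ]; rfl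
    have hUQx : U (Q x) = 0 := by
      have : ⟪U (Q x), U (Q x)⟫_ℂ = 0 := by
        rw [← adjoint_inner_left]
        have : adjoint U (U (Q x)) = P (Q x) := rfl
        rw [this, hPQx, inner_zero_left]
      exact inner_self_eq_zero.mp this
    have hTQx : T (Q x) = 0 := by
      have : Q x ∈ LinearMap.ker (T : H →ₗ[ℂ] H) := hker ▸ (by simpa using hUQx)
      simpa using this
    have : ‖R (Q x)‖ = 0 := by rw [hnormRT, hTQx, norm_zero]
    simpa [mul_apply] using norm_eq_zero.mp this
  have hQR : Q * R = 0 := by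
    have : adjoint (R * Q) = Q * R := by
      rw [← star_eq_adjoint, star_mul, star_eq_adjoint, star_eq_adjoint, hQ_sa, hR_sa]
    rw [← this, hRQ]
    simp [← star_eq_adjoint]
  have hPR : P * R = R := by
    have h := hQR
    rw [hQdef, sub_mul, one_mul, sub_eq_zero] at h
    exact h.symm
  -- contraction facts
  have hUcontr : ∀ y : H, ‖U y‖ ≤ ‖y‖ := by
    intro y
    have h1 : ⟪U y, U y⟫_ℂ = ⟪P y, y⟫_ℂ := by
      rw [← adjoint_inner_left]; rfl
    have h2 : (‖U y‖ : ℝ) ^ 2 ≤ ‖P y‖ * ‖y‖ := by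
      rw [← inner_self_eq_norm_sq (𝕜 := ℂ), h1]
      exact re_inner_le_norm _ _
    have hPy : ‖P y‖ ≤ ‖y‖ := by
      rcases eq_or_ne (P y) 0 with h | h
      · simp [h]
      · have h3 : ⟪P y, P y⟫_ℂ = ⟪y, P (P y)⟫_ℂ := by
          rw [← adjoint_inner_right, hP_sa]
        have h4 : P (P y) = P y := by rw [← ContinuousLinearMap.mul_apply, hP2]
        rw [h4] at h3
        have h5 : (‖P y‖ : ℝ) ^ 2 ≤ ‖y‖ * ‖P y‖ := by
          rw [← inner_self_eq_norm_sq (𝕜 := ℂ), h3]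
          exact re_inner_le_norm _ _
        have hpos : 0 < ‖P y‖ := norm_pos_iff.mpr h
        nlinarith
    nlinarith [norm_nonneg (U y), norm_nonneg y, norm_nonneg (P y)]
  have hUadj : ∀ y : H, ‖adjoint U y‖ ≤ ‖y‖ := by
    intro y
    rcases eq_or_ne (adjoint U y) 0 with h | h
    · simp [h]
    have h1 : ⟪adjoint U y, adjoint U y⟫_ℂ = ⟪U (adjoint U y), y⟫_ℂ :=
      adjoint_inner_right U (adjoint U y) y
    have h2 : (‖adjoint U y‖ : ℝ) ^ 2 ≤ ‖U (adjoint U y)‖ * ‖y‖ := by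
      rw [← inner_self_eq_norm_sq (𝕜 := ℂ), h1]
      exact re_inner_le_norm _ _
    have h3 := hUcontr (adjoint U y)
    have hpos : 0 < ‖adjoint U y‖ := norm_pos_iff.mpr h
    nlinarith [norm_nonneg y]
  -- main pointwise bound
  have key : ∀ γ : ℂ, ∀ x : H,
      ‖(R * U - γ • (1 : H →L[ℂ] H)) x‖ ≤ ‖T - γ • (1 : H →L[ℂ] H)‖ * ‖x‖ := by
    intro γ x
    set D : H →L[ℂ] H := T - γ • 1 with hDdef
    set A : H →L[ℂ] H := adjoint U * D * U with hAdef
    have hA_eq : A = R * U - γ • P := by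
      rw [hAdef, hDdef, mul_sub, sub_mul, mul_smul_comm, smul_mul_assoc, mul_one,
        hTUR]
      congr 1
      calc adjoint U * (U * R) * U = (adjoint U * U) * R * U := by noncomm_ring
      _ = R * U := by rw [← hPdef, hPR]
    have hS_eq : R * U - γ • (1 : H →L[ℂ] H) = A - γ • Q := by
      rw [hA_eq, hQdef, smul_sub]
      abel
    have hQA : Q * A = 0 := by
      rw [hA_eq, mul_sub, ← mul_assoc, hQR, zero_mul, mul_smul_comm, hQP, smul_zero,
        sub_zero]
    have hAP : A * P = A := by
      rw [hA_eq, sub_mul, smul_mul_assoc, hP2, mul_assoc, hUP]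
    have hDQ : D * Q = -γ • Q := by
      rw [hDdef, sub_mul, smul_mul_assoc, one_mul, hTUR, mul_assoc, hRQ, mul_zero,
        zero_sub, neg_smul]
    -- orthogonality of A x and Q x
    have horth : ⟪A x, (γ • Q) x⟫_ℂ = 0 := by
      have : ⟪A x, Q x⟫_ℂ = ⟪Q (A x), x⟫_ℂ := by
        conv_rhs => rw [← hQ_sa]
        rw [adjoint_inner_left]
      have hQAx : Q (A x) = 0 := by rw [← ContinuousLinearMap.mul_apply, hQA]; rfl
      rw [smul_apply, inner_smul_right, this, hQAx, inner_zero_left, mul_zero]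
    -- Pythagoras for output
    have hpyth : ‖(A - γ • Q) x‖ ^ 2 = ‖A x‖ ^ 2 + ‖(γ • Q) x‖ ^ 2 := by
      have : (A - γ • Q) x = A x - (γ • Q) x := rfl
      rw [this, norm_sub_sq (𝕜 := ℂ), horth]
      simp
    -- Pythagoras for input: ‖P x‖² + ‖Q x‖² = ‖x‖²
    have hinput : ‖P x‖ ^ 2 + ‖Q x‖ ^ 2 = ‖x‖ ^ 2 := by
      have hx : x = P x + Q x := by rw [hQdef]; simp
      have horth2 : ⟪P x, Q x⟫_ℂ = 0 := by
        have : ⟪P x, Q x⟫_ℂ = ⟪x, P (Q x)⟫_ℂ := by rw [← adjoint_inner_right, hP_sa]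
        have hPQx : P (Q x) = 0 := by rw [← ContinuousLinearMap.mul_apply, hPQ]; rfl
        rw [this, hPQx, inner_zero_right]
      calc ‖P x‖ ^ 2 + ‖Q x‖ ^ 2 = ‖P x + Q x‖ ^ 2 := by
            rw [norm_add_sq (𝕜 := ℂ), horth2]; simp
      _ = ‖x‖ ^ 2 := by rw [← hx]
    -- bound ‖A x‖
    have hAx : ‖A x‖ ≤ ‖D‖ * ‖P x‖ := by
      have h1 : A x = adjoint U (D (U (P x))) := by
        have : A x = (A * P) x := by rw [hAP]
        rw [this]; rfl
      rw [h1]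
      calc ‖adjoint U (D (U (P x)))‖ ≤ ‖D (U (P x))‖ := hUadj _
      _ ≤ ‖D‖ * ‖U (P x)‖ := le_opNorm _ _
      _ ≤ ‖D‖ * ‖P x‖ := by
          exact mul_le_mul_of_nonneg_left (hUcontr _) (norm_nonneg D)
    -- bound ‖γ • Q x‖
    have hQx : ‖(γ • Q) x‖ ≤ ‖D‖ * ‖Q x‖ := by
      have h1 : (γ • Q) x = -(D (Q x)) := by
        have : D (Q x) = (D * Q) x := rfl
        rw [this, hDQ]
        simp
      rw [h1, norm_neg]
      exact le_opNorm _ _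
    have hfinal : ‖(A - γ • Q) x‖ ^ 2 ≤ (‖D‖ * ‖x‖) ^ 2 := by
      rw [hpyth]
      have h2 : ‖A x‖ ^ 2 ≤ (‖D‖ * ‖P x‖) ^ 2 :=
        pow_le_pow_left₀ (norm_nonneg _) hAx 2
      have h3 : ‖(γ • Q) x‖ ^ 2 ≤ (‖D‖ * ‖Q x‖) ^ 2 :=
        pow_le_pow_left₀ (norm_nonneg _) hQx 2
      calc ‖A x‖ ^ 2 + ‖(γ • Q) x‖ ^ 2 ≤ (‖D‖ * ‖P x‖) ^ 2 + (‖D‖ * ‖Q x‖) ^ 2 :=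
            add_le_add h2 h3
      _ = ‖D‖ ^ 2 * (‖P x‖ ^ 2 + ‖Q x‖ ^ 2) := by ring
      _ = (‖D‖ * ‖x‖) ^ 2 := by rw [hinput]; ring
    rw [hS_eq]
    nlinarith [norm_nonneg ((A - γ • Q) x), mul_nonneg (norm_nonneg D) (norm_nonneg x),
      hfinal]
  constructor
  · intro γ
    exact opNorm_le_bound _ (norm_nonneg _) (key γ)
  · have h := key 0
    simp only [zero_smul, sub_zero] at h
    exact opNorm_le_bound _ (norm_nonneg _) h
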